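/- arXiv:1811.01760 — 2 statements merged into one kernel-verified Lean document; each statement's English description precedes it below -/
import Mathlib

section
/- Let Q : ℝ^m → H be a compact (bounded) operator, S the closure of the range of Q, P the orthogonal projection onto S, and M = P T_x P. Let r = rank((Q*Q)^†) and R ∈ ℝ^{m×r} a matrix with R R* = (Q*Q)^† (Moore–Penrose pseudoinverse). Set K̃ = R* Q* S_x* S_x Q R ∈ ℝ^{r×r} and b = R* Q* S_x* ȳ ∈ ℝ^r. Then for every t ≥ 1 the projected-KCGM iterate ω_t = argmin_{ω ∈ K_t(M, P S_x* ȳ)} ‖M ω − P S_x* ȳ‖_H equals Q R a_t, where a_t = argmin_{a ∈ K_t(K̃, b)} ‖K̃ a − b‖₂ and K_t(K̃, b) = span{b, K̃b, …, K̃^{t−1}b}. In particular, for any polynomial q one has q(M) P S_x* ȳ = Q R q(K̃) b and ‖q(M) P S_x* ȳ‖_H = ‖q(K̃) b‖₂. -/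
/-!
Statement 5: numerical realization of projected KCGM.
`Q : ℝ^m → H` bounded (compact, being finite rank), `S = closure (range Q)`,
`P` the orthogonal projection onto `S`, `M = P T_x P`.  `R ∈ ℝ^{m×r}` (encoded as an
injective linear map `ℝ^r → ℝ^m`) satisfies `R R* = (Q*Q)†` (Moore–Penrose pseudoinverse,
encoded through the four Penrose conditions).  With `K̃ = R*Q*S_x*S_x Q R` and
`b = R*Q*S_x*ȳ`, the projected-KCGM iterate equals `Q R aₜ` where `aₜ` is the
corresponding Krylov minimizer of `‖K̃ a − b‖₂`; moreover for every polynomial `q`,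
`q(M) P S_x* ȳ = Q R q(K̃) b` and `‖q(M) P S_x* ȳ‖ = ‖q(K̃) b‖₂`.
-/

open Polynomial RealInnerProductSpace

noncomputable section
set_option maxHeartbeats 1000000

theorem projected_kcgm_numerical_realization
    {H : Type*} [NormedAddCommGroup H] [InnerProductSpace ℝ H] [CompleteSpace H]
    [SecondCountableTopology H]
    (n m r : ℕ)
    -- the sample points and sampling operator
    (x : Fin n → H) (ybar : EuclideanSpace ℝ (Fin n))
    (Sx : H →L[ℝ] EuclideanSpace ℝ (Fin n))
    (hSx : ∀ (v : H) (i : Fin n), Sx v i = (Real.sqrt n)⁻¹ * ⟪v, x i⟫)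
    -- Q and the projection P onto the closure of its range
    (Q : EuclideanSpace ℝ (Fin m) →L[ℝ] H)
    (P : H →L[ℝ] H) (hPsa : IsSelfAdjoint P) (hPidem : P.comp P = P)
    (hPrange : LinearMap.range (P : H →ₗ[ℝ] H) = (LinearMap.range (Q : EuclideanSpace ℝ (Fin m) →ₗ[ℝ] H)).topologicalClosure)
    -- N = Q*Q and its Moore–Penrose pseudoinverse N†
    (N Ndag : EuclideanSpace ℝ (Fin m) →L[ℝ] EuclideanSpace ℝ (Fin m))
    (hN : N = (ContinuousLinearMap.adjoint Q).comp Q)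
    (hPen1 : N.comp (Ndag.comp N) = N) (hPen2 : Ndag.comp (N.comp Ndag) = Ndag)
    (hPen3 : IsSelfAdjoint (N.comp Ndag)) (hPen4 : IsSelfAdjoint (Ndag.comp N))
    -- R with R R* = N†, of full column rank r
    (R : EuclideanSpace ℝ (Fin r) →L[ℝ] EuclideanSpace ℝ (Fin m))
    (hRinj : Function.Injective R)
    (hRR : R.comp (ContinuousLinearMap.adjoint R) = Ndag)
    -- the operators of the algorithm
    (Tx : H →L[ℝ] H) (hTx : Tx = (ContinuousLinearMap.adjoint Sx).comp Sx)
    (Mo : H →L[ℝ] H) (hMo : Mo = P.comp (Tx.comp P))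
    (bH : H) (hbH : bH = P ((ContinuousLinearMap.adjoint Sx) ybar))
    (Ktil : EuclideanSpace ℝ (Fin r) →L[ℝ] EuclideanSpace ℝ (Fin r))
    (hKtil : Ktil = (ContinuousLinearMap.adjoint R).comp
      ((ContinuousLinearMap.adjoint Q).comp
        ((ContinuousLinearMap.adjoint Sx).comp (Sx.comp (Q.comp R)))))
    (b : EuclideanSpace ℝ (Fin r))
    (hb : b = (ContinuousLinearMap.adjoint R)
      ((ContinuousLinearMap.adjoint Q) ((ContinuousLinearMap.adjoint Sx) ybar))) :
    (∀ t : ℕ, 1 ≤ t →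
      -- every Krylov minimizer of the Euclidean problem yields a Krylov minimizer
      -- of the Hilbertian problem, and conversely every Hilbertian minimizer arises
      -- in this way
      ((∀ a : EuclideanSpace ℝ (Fin r),
          a ∈ Submodule.span ℝ {w | ∃ k < t, w = (Ktil ^ k) b} →
          (∀ a' ∈ Submodule.span ℝ {w | ∃ k < t, w = (Ktil ^ k) b},
            ‖Ktil a - b‖ ≤ ‖Ktil a' - b‖) →
          (Q (R a) ∈ Submodule.span ℝ {w | ∃ k < t, w = (Mo ^ k) bH} ∧
            ∀ v ∈ Submodule.span ℝ {w | ∃ k < t, w = (Mo ^ k) bH},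
              ‖Mo (Q (R a)) - bH‖ ≤ ‖Mo v - bH‖)) ∧
        (∀ ωt : H,
          ωt ∈ Submodule.span ℝ {w | ∃ k < t, w = (Mo ^ k) bH} →
          (∀ v ∈ Submodule.span ℝ {w | ∃ k < t, w = (Mo ^ k) bH},
            ‖Mo ωt - bH‖ ≤ ‖Mo v - bH‖) →
          ∃ a : EuclideanSpace ℝ (Fin r),
            a ∈ Submodule.span ℝ {w | ∃ k < t, w = (Ktil ^ k) b} ∧
            (∀ a' ∈ Submodule.span ℝ {w | ∃ k < t, w = (Ktil ^ k) b},
              ‖Ktil a - b‖ ≤ ‖Ktil a' - b‖) ∧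
            ωt = Q (R a)))) ∧
    (∀ q : Polynomial ℝ,
      (Polynomial.aeval Mo q) bH = Q (R ((Polynomial.aeval Ktil q) b)) ∧
      ‖(Polynomial.aeval Mo q) bH‖ = ‖(Polynomial.aeval Ktil q) b‖) := by
  classical
  set G : EuclideanSpace ℝ (Fin r) →L[ℝ] H := Q.comp R with hG
  -- N is self-adjoint
  have hNsa : ContinuousLinearMap.adjoint N = N := by
    rw [hN, ContinuousLinearMap.adjoint_comp, ContinuousLinearMap.adjoint_adjoint]
  -- Q ∘ Ndag ∘ N = Q
  have hQNdagN : ∀ u, Q (Ndag (N u)) = Q u := by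
    intro u
    have h0 : N (Ndag (N u)) = N u := by
      have := congrArg (fun T => T u) hPen1
      simpa using this
    have hNd : N (Ndag (N u) - u) = 0 := by simp [map_sub, h0]
    have hin : ⟪Q (Ndag (N u) - u), Q (Ndag (N u) - u)⟫ = 0 := by
      rw [← ContinuousLinearMap.adjoint_inner_left Q]
      have : (ContinuousLinearMap.adjoint Q) (Q (Ndag (N u) - u)) = N (Ndag (N u) - u) := by
        rw [hN]; rfl
      rw [this, hNd, inner_zero_left]
    have : Q (Ndag (N u) - u) = 0 := by
      simpa using inner_self_eq_zero.mp hin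
    have := sub_eq_zero.mp (by simpa [map_sub] using this)
    exact this
  -- R* N R = 1
  have hRNR : (ContinuousLinearMap.adjoint R).comp (N.comp R) = ContinuousLinearMap.id ℝ _ := by
    set A := (ContinuousLinearMap.adjoint R).comp (N.comp R) - ContinuousLinearMap.id ℝ _ with hAdef
    have hA : A.comp (ContinuousLinearMap.adjoint R) = 0 := by
      ext w
      have h2 : Ndag (N (Ndag w)) = Ndag w := by
        have := congrArg (fun T => T w) hPen2
        simpa using this
      rw [← hRR] at h2
      simp only [ContinuousLinearMap.comp_apply] at h2
      have h4 := hRinj h2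
      simp only [hAdef, ContinuousLinearMap.comp_apply, ContinuousLinearMap.sub_apply,
        ContinuousLinearMap.id_apply, ContinuousLinearMap.zero_apply]
      rw [h4, sub_self]
    have hAsa : ContinuousLinearMap.adjoint A = A := by
      rw [hAdef, map_sub]
      congr 1
      · rw [ContinuousLinearMap.adjoint_comp, ContinuousLinearMap.adjoint_comp,
          ContinuousLinearMap.adjoint_adjoint, hNsa, ContinuousLinearMap.comp_assoc]
      · exact ContinuousLinearMap.adjoint_id
    have hRA : R.comp A = 0 := by
      have h5 := congrArg ContinuousLinearMap.adjoint hA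
      rw [ContinuousLinearMap.adjoint_comp, ContinuousLinearMap.adjoint_adjoint, hAsa] at h5
      simpa using h5
    have hA0 : A = 0 := by
      ext u
      have h6 := congrArg (fun T => T u) hRA
      simp only [ContinuousLinearMap.comp_apply, ContinuousLinearMap.zero_apply] at h6
      have h7 : R (A u) = R 0 := by simpa using h6
      have h8 := hRinj h7
      simp [h8]
    have h8 := sub_eq_zero.mp hA0
    exact h8
  -- G* G = 1 pointwise
  have hGadj : ∀ w : H, ContinuousLinearMap.adjoint G w =
      (ContinuousLinearMap.adjoint R) ((ContinuousLinearMap.adjoint Q) w) := by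
    intro w
    rw [hG, ContinuousLinearMap.adjoint_comp]
    rfl
  have hGtG : ∀ v, ContinuousLinearMap.adjoint G (G v) = v := by
    intro v
    rw [hGadj]
    have : (ContinuousLinearMap.adjoint Q) (G v) = N (R v) := by
      rw [hN, hG]; rfl
    rw [this]
    have := congrArg (fun T => T v) hRNR
    simpa using this
  -- G is isometric
  have hGnorm : ∀ v, ‖G v‖ = ‖v‖ := by
    intro v
    have h1 : ⟪G v, G v⟫ = ⟪v, v⟫ := by
      rw [← ContinuousLinearMap.adjoint_inner_left G, hGtG]
    have h2 : ‖G v‖ ^ 2 = ‖v‖ ^ 2 := by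
      rw [← real_inner_self_eq_norm_sq, ← real_inner_self_eq_norm_sq, h1]
    have := congrArg Real.sqrt h2
    rwa [Real.sqrt_sq (norm_nonneg _), Real.sqrt_sq (norm_nonneg _)] at this
  -- P fixes range Q
  have hPQ : ∀ u, P (Q u) = Q u := by
    intro u
    have hmem : Q u ∈ LinearMap.range (P : H →ₗ[ℝ] H) := by
      rw [hPrange]
      exact Submodule.le_topologicalClosure _ ⟨u, rfl⟩
    obtain ⟨w, hw⟩ := hmem
    have := congrArg (fun T => T w) hPidem
    simp only [ContinuousLinearMap.comp_apply] at this
    rw [← hw]; exact this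
  -- P is symmetric pointwise
  have hPsym : ∀ w z : H, ⟪P w, z⟫ = ⟪w, P z⟫ := by
    intro w z
    rw [← ContinuousLinearMap.adjoint_inner_left P, hPsa.adjoint_eq]
  -- E := G G* equals P
  have hEQ : ∀ u, G (ContinuousLinearMap.adjoint G (Q u)) = Q u := by
    intro u
    rw [hGadj]
    have h1 : (ContinuousLinearMap.adjoint Q) (Q u) = N u := by rw [hN]; rfl
    rw [h1]
    have h2 : R ((ContinuousLinearMap.adjoint R) (N u)) = Ndag (N u) := by
      have := congrArg (fun T => T (N u)) hRR
      simpa using this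
    rw [hG]
    simp only [ContinuousLinearMap.comp_apply]
    rw [h2, hQNdagN]
  have hEsym : ∀ w z : H, ⟪G (ContinuousLinearMap.adjoint G w), z⟫
      = ⟪w, G (ContinuousLinearMap.adjoint G z)⟫ := by
    intro w z
    calc ⟪G (ContinuousLinearMap.adjoint G w), z⟫
        = ⟪ContinuousLinearMap.adjoint G w, ContinuousLinearMap.adjoint G z⟫ :=
          (ContinuousLinearMap.adjoint_inner_right G _ _).symm
      _ = ⟪w, G (ContinuousLinearMap.adjoint G z)⟫ :=
          ContinuousLinearMap.adjoint_inner_left G _ _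
  -- range P = range Q (range Q is closed, being finite dimensional)
  have hrangeQ : (LinearMap.range (Q : EuclideanSpace ℝ (Fin m) →ₗ[ℝ] H)).topologicalClosure = LinearMap.range (Q : EuclideanSpace ℝ (Fin m) →ₗ[ℝ] H) := by
    exact IsClosed.submodule_topologicalClosure_eq
      (Submodule.closed_of_finiteDimensional _)
  have hPmem : ∀ w : H, ∃ u, Q u = P w := by
    intro w
    have : P w ∈ LinearMap.range (Q : EuclideanSpace ℝ (Fin m) →ₗ[ℝ] H) := by
      rw [← hrangeQ, ← hPrange]
      exact ⟨w, rfl⟩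
    exact this
  -- E ∘ P = E
  have hEP : ∀ w, G (ContinuousLinearMap.adjoint G (P w)) = G (ContinuousLinearMap.adjoint G w) := by
    intro w
    have hPG : ∀ y, P (G y) = G y := by
      intro y
      simp only [hG, ContinuousLinearMap.comp_apply]
      exact hPQ _
    apply ext_inner_right ℝ
    intro z
    calc ⟪G (ContinuousLinearMap.adjoint G (P w)), z⟫
        = ⟪P w, G (ContinuousLinearMap.adjoint G z)⟫ := hEsym _ _
      _ = ⟪w, P (G (ContinuousLinearMap.adjoint G z))⟫ := hPsym _ _
      _ = ⟪w, G (ContinuousLinearMap.adjoint G z)⟫ := by rw [hPG]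
      _ = ⟪G (ContinuousLinearMap.adjoint G w), z⟫ := (hEsym _ _).symm
  -- E = P
  have hEeqP : ∀ w, G (ContinuousLinearMap.adjoint G w) = P w := by
    intro w
    obtain ⟨u, hu⟩ := hPmem w
    rw [← hEP, ← hu, hEQ]
  -- bH = G b
  have hbG : bH = G b := by
    rw [hbH, hb, ← hEeqP]
    congr 1
    rw [hGadj]
  -- Ktil = G* ∘ Tx ∘ G pointwise
  have hKtilpt : ∀ a, Ktil a = ContinuousLinearMap.adjoint G (Tx (G a)) := by
    intro a
    rw [hKtil, hGadj, hTx]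
    rfl
  -- Mo ∘ G = G ∘ Ktil pointwise
  have hPG : ∀ y, P (G y) = G y := by
    intro y
    simp only [hG, ContinuousLinearMap.comp_apply]
    exact hPQ _
  have hMoG : ∀ a, Mo (G a) = G (Ktil a) := by
    intro a
    rw [hMo]
    simp only [ContinuousLinearMap.comp_apply]
    rw [hPG, ← hEeqP, hKtilpt]
  -- powers
  have hpow : ∀ k, (Mo ^ k) bH = G ((Ktil ^ k) b) := by
    intro k
    induction k with
    | zero => simpa using hbG
    | succ k ih =>
      rw [pow_succ', pow_succ', ContinuousLinearMap.mul_apply,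
        ContinuousLinearMap.mul_apply, ih, hMoG]
  -- aeval
  have haeval : ∀ q : Polynomial ℝ, (Polynomial.aeval Mo q) bH = G ((Polynomial.aeval Ktil q) b) := by
    intro q
    induction q using Polynomial.induction_on' with
    | add p q hp hq =>
      simp only [map_add, ContinuousLinearMap.add_apply, hp, hq]
    | monomial k a =>
      simp only [Polynomial.aeval_monomial, ContinuousLinearMap.mul_apply,
        Algebra.algebraMap_eq_smul_one, ContinuousLinearMap.smul_apply,
        ContinuousLinearMap.one_apply, hpow, map_smul]
  -- difference norm
  have hdiff : ∀ a, ‖Mo (G a) - bH‖ = ‖Ktil a - b‖ := by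
    intro a
    rw [hMoG, hbG, ← map_sub, hGnorm]
  -- Krylov spans
  have hsetim : ∀ t : ℕ, {w : H | ∃ k < t, w = (Mo ^ k) bH}
      = G '' {w | ∃ k < t, w = (Ktil ^ k) b} := by
    intro t
    ext w
    constructor
    · rintro ⟨k, hk, rfl⟩
      exact ⟨(Ktil ^ k) b, ⟨k, hk, rfl⟩, (hpow k).symm⟩
    · rintro ⟨a, ⟨k, hk, rfl⟩, rfl⟩
      exact ⟨k, hk, (hpow k).symm⟩
  have hmemspan : ∀ (t : ℕ) (v : H),
      v ∈ Submodule.span ℝ {w | ∃ k < t, w = (Mo ^ k) bH} ↔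
        ∃ a ∈ Submodule.span ℝ {w | ∃ k < t, w = (Ktil ^ k) b}, G a = v := by
    intro t v
    rw [hsetim t, show (⇑G) = ⇑(G : EuclideanSpace ℝ (Fin r) →ₗ[ℝ] H) from rfl,
      Submodule.span_image (G : EuclideanSpace ℝ (Fin r) →ₗ[ℝ] H)]
    exact Submodule.mem_map
  refine ⟨?_, ?_⟩
  · intro t ht
    refine ⟨?_, ?_⟩
    · intro a ha hmin
      refine ⟨(hmemspan t _).mpr ⟨a, ha, rfl⟩, ?_⟩
      intro v hv
      obtain ⟨a', ha', rfl⟩ := (hmemspan t v).mp hv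
      have h1 : ‖Mo (Q (R a)) - bH‖ = ‖Ktil a - b‖ := hdiff a
      rw [h1, hdiff a']
      exact hmin a' ha'
    · intro ωt hω hminω
      obtain ⟨a, ha, rfl⟩ := (hmemspan t ωt).mp hω
      refine ⟨a, ha, ?_, rfl⟩
      intro a' ha'
      have h2 := hminω (G a') ((hmemspan t _).mpr ⟨a', ha', rfl⟩)
      rw [hdiff a, hdiff a'] at h2
      exact h2
  · intro q
    exact ⟨haeval q, by rw [haeval q, hGnorm]⟩
end
end

section
/- Assume the source condition f_H = ℒ^ζ g₀ with ‖g₀‖_ρ ≤ R (ζ ≥ 0, R > 0), and for λ > 0 define ω_⋆^λ = G_λ(T) S_ρ* f_H, where G_λ(u) = 1/u for u ≥ λ and G_λ(u) = 0 for u < λ (functional calculus applied to T). Then: (1) for any a ≤ ζ, ‖ℒ^{−a}(S_ρ ω_⋆^λ − f_H)‖_ρ ≤ R λ^{ζ−a}; (2) ‖T^{a−1/2} ω_⋆^λ‖_H ≤ R λ^{ζ+a−1} if −ζ ≤ a ≤ 1−ζ, and ‖T^{a−1/2} ω_⋆^λ‖_H ≤ R κ^{2(ζ+a−1)} if a ≥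 1−ζ. -/
/-!
Statement 9: properties of the spectral cut-off vector `ω_⋆^λ = G_λ(T) S_ρ* f_H`.
(1) `‖ℒ^{−a}(S_ρ ω_⋆^λ − f_H)‖_ρ ≤ R λ^{ζ−a}` for `a ≤ ζ`;
(2) `‖T^{a−1/2} ω_⋆^λ‖_H ≤ R λ^{ζ+a−1}` for `−ζ ≤ a ≤ 1−ζ`, and
    `‖T^{a−1/2} ω_⋆^λ‖_H ≤ R κ^{2(ζ+a−1)}` for `a ≥ 1−ζ`.

The (possibly unbounded) fractional powers of `T` and `ℒ` and the cut-off `G_λ(T)`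
are expressed through a singular value decomposition of `S_ρ`: `e` is an orthonormal
eigenbasis of the covariance operator `T` with eigenvalues `μ`, and `f` an orthonormal
family in `L²(ρ_X)` with `S_ρ (e i) = √(μ i) • f i`; a vector whose coordinates are the
appropriately rescaled coordinates of the argument plays the role of the image under
the fractional power.
-/

open MeasureTheory RealInnerProductSpace

noncomputable section

section Helpers

variable {E F : Type*} [NormedAddCommGroup E] [InnerProductSpace ℝ E]
  [NormedAddCommGroup F] [InnerProductSpace ℝ F]

/-- a.e. norm bound from the a.e. kernel bound, via the support of the measure. -/
lemma ae_norm_le_of_inner_bound {H : Type*} [NormedAddCommGroup H] [InnerProductSpace ℝ H]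
    [SecondCountableTopology H] [MeasurableSpace H] [BorelSpace H]
    (ρX : Measure H) (κ : ℝ) (hκ : 0 ≤ κ)
    (hbound : ∀ᵐ x ∂ρX, ∀ᵐ x' ∂ρX, ⟪x, x'⟫ ≤ κ ^ 2) :
    ∀ᵐ x ∂ρX, ‖x‖ ≤ κ := by
  classical
  set S : Set (Set H) := {U ∈ TopologicalSpace.countableBasis H | ρX U = 0} with hS
  have hSc : S.Countable := (TopologicalSpace.countable_countableBasis H).mono
    (Set.sep_subset _ _)
  have hG : ρX (⋃₀ S) = 0 :=
    (measure_sUnion_null_iff hSc).mpr (fun U hU => hU.2)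
  have hsupp' : ∀ᵐ x ∂ρX, x ∉ ⋃₀ S := by
    rw [ae_iff]; simpa only [not_not, Set.setOf_mem_eq] using hG
  filter_upwards [hbound, hsupp'] with x hx hxs
  have hCclosed : IsClosed {x' : H | ⟪x, x'⟫ ≤ κ ^ 2} :=
    isClosed_le (continuous_const.inner continuous_id) continuous_const
  have hCc_null : ρX {x' : H | ⟪x, x'⟫ ≤ κ ^ 2}ᶜ = 0 := by
    have := ae_iff.mp hx
    simpa [Set.compl_setOf] using this
  have hxC : x ∈ {x' : H | ⟪x, x'⟫ ≤ κ ^ 2} := by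
    by_contra hxc
    obtain ⟨U, hUb, hxU, hUsub⟩ :=
      (TopologicalSpace.isBasis_countableBasis H).exists_subset_of_mem_open hxc
        hCclosed.isOpen_compl
    have hU0 : ρX U = 0 := le_antisymm (hCc_null ▸ measure_mono hUsub) zero_le
    exact hxs ⟨U, ⟨hUb, hU0⟩, hxU⟩
  have hxx : ⟪x, x⟫ ≤ κ ^ 2 := hxC
  have h2 : ‖x‖ ^ 2 ≤ κ ^ 2 := by rwa [real_inner_self_eq_norm_sq] at hxx
  nlinarith [norm_nonneg x]

/-- A Hilbert basis of the closure of the span of an orthonormal family. -/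
lemma exists_hilbertBasis_closure_span [CompleteSpace E] {ι : Type*} {f : ι → E}
    (hf : Orthonormal ℝ f) :
    ∃ b : HilbertBasis ι ℝ ((Submodule.span ℝ (Set.range f)).topologicalClosure),
      ∀ i, (b i : E) = f i := by
  set K := (Submodule.span ℝ (Set.range f)).topologicalClosure with hK
  haveI : CompleteSpace K :=
    (Submodule.isClosed_topologicalClosure _).completeSpace_coe
  have hmem : ∀ i, f i ∈ K := fun i =>
    Submodule.le_topologicalClosure _ (Submodule.subset_span ⟨i, rfl⟩)
  set f' : ι → K := fun i => ⟨f i, hmem i⟩ with hf'def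
  have hf' : Orthonormal ℝ f' := by
    classical
    rw [orthonormal_iff_ite] at hf ⊢
    intro i j
    rw [show (inner ℝ (f' i) (f' j) : ℝ) = inner ℝ (f i) (f j) from rfl]
    exact hf i j
  have key : (Submodule.span ℝ (Set.range f') : Set K).image Subtype.val
      = (Submodule.span ℝ (Set.range f) : Set E) := by
    have hmap : Submodule.map K.subtype (Submodule.span ℝ (Set.range f'))
        = Submodule.span ℝ (Set.range f) := by
      rw [Submodule.map_span]
      congr 1
      ext y
      simp [hf'def]
    have := congrArg (fun (s : Submodule ℝ E) => (s : Set E)) hmap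
    simpa [Submodule.map_coe] using this
  have hsp : ⊤ ≤ (Submodule.span ℝ (Set.range f')).topologicalClosure := by
    intro x _
    have hx : (x : E) ∈ closure (Submodule.span ℝ (Set.range f) : Set E) := by
      have hx2 : (x : E) ∈ ((Submodule.span ℝ (Set.range f)).topologicalClosure : Set E) := x.2
      rwa [Submodule.topologicalClosure_coe] at hx2
    show x ∈ (Submodule.span ℝ (Set.range f')).topologicalClosure
    rw [← SetLike.mem_coe, Submodule.topologicalClosure_coe]
    rw [closure_subtype, key]
    exact hx
  refine ⟨HilbertBasis.mk hf' hsp, fun i => ?_⟩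
  rw [HilbertBasis.coe_mk]

/-- Norm bound from coordinatewise domination. -/
lemma norm_le_of_coord_dominated [CompleteSpace E] {ι : Type*} (b : HilbertBasis ι ℝ E)
    {w : ι → F} (hw : Orthonormal ℝ w) (x : E) (y : F) {M : ℝ} (hM : 0 ≤ M)
    (h : ∀ i, |⟪x, b i⟫| ≤ M * |⟪y, w i⟫|) : ‖x‖ ≤ M * ‖y‖ := by
  have hx2 : ‖x‖ ^ 2 = ∑' i, ⟪x, b i⟫ ^ 2 := by
    rw [← real_inner_self_eq_norm_sq, ← b.tsum_inner_mul_inner x x]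
    exact tsum_congr fun i => by rw [real_inner_comm (b i) x, sq]
  have hsum1 : Summable fun i => ⟪x, b i⟫ ^ 2 := by
    refine (b.summable_inner_mul_inner x x).congr fun i => ?_
    rw [real_inner_comm (b i) x, sq]
  have hsumy : Summable fun i => ⟪y, w i⟫ ^ 2 := by
    refine (hw.inner_products_summable (x := y)).congr fun i => ?_
    rw [real_inner_comm (w i) y, Real.norm_eq_abs, sq_abs]
  have hdom : ∀ i, ⟪x, b i⟫ ^ 2 ≤ M ^ 2 * ⟪y, w i⟫ ^ 2 := by
    intro i
    have := pow_le_pow_left₀ (abs_nonneg _) (h i) 2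
    calc ⟪x, b i⟫ ^ 2 = |⟪x, b i⟫| ^ 2 := (sq_abs _).symm
      _ ≤ (M * |⟪y, w i⟫|) ^ 2 := this
      _ = M ^ 2 * ⟪y, w i⟫ ^ 2 := by rw [mul_pow, sq_abs]
  have hle1 : ∑' i, ⟪x, b i⟫ ^ 2 ≤ M ^ 2 * ∑' i, ⟪y, w i⟫ ^ 2 := by
    rw [← tsum_mul_left]
    exact Summable.tsum_le_tsum hdom hsum1 (hsumy.mul_left _)
  have hle2 : ∑' i, ⟪y, w i⟫ ^ 2 ≤ ‖y‖ ^ 2 := by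
    calc ∑' i, ⟪y, w i⟫ ^ 2 = ∑' i, ‖⟪w i, y⟫‖ ^ 2 :=
          tsum_congr fun i => by rw [real_inner_comm (w i) y, Real.norm_eq_abs, sq_abs]
      _ ≤ ‖y‖ ^ 2 := hw.tsum_inner_products_le y
  have hfin : ‖x‖ ^ 2 ≤ (M * ‖y‖) ^ 2 := by
    rw [hx2, mul_pow]
    exact hle1.trans (mul_le_mul_of_nonneg_left hle2 (sq_nonneg M))
  calc ‖x‖ = Real.sqrt (‖x‖ ^ 2) := (Real.sqrt_sq (norm_nonneg x)).symm
    _ ≤ Real.sqrt ((M * ‖y‖) ^ 2) := Real.sqrt_le_sqrt hfin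
    _ = M * ‖y‖ := Real.sqrt_sq (mul_nonneg hM (norm_nonneg y))

end Helpers

theorem spectral_cutoff_vector_properties
    {H : Type*} [NormedAddCommGroup H] [InnerProductSpace ℝ H] [CompleteSpace H]
    [SecondCountableTopology H] [MeasurableSpace H] [BorelSpace H]
    -- the marginal distribution
    (ρX : Measure H) [IsProbabilityMeasure ρX]
    (hsupp : ∃ K : Set H, IsCompact K ∧ ρX Kᶜ = 0)
    (κ : ℝ) (hκ : 1 ≤ κ)
    (hbound : ∀ᵐ x ∂ρX, ∀ᵐ x' ∂ρX, ⟪x, x'⟫ ≤ κ ^ 2)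
    -- `S_ρ` and the covariance operator `T`
    (Sρ : H →L[ℝ] Lp ℝ 2 ρX)
    (hSρ : ∀ v : H, (Sρ v : H → ℝ) =ᵐ[ρX] (fun x => ⟪v, x⟫))
    (T : H →L[ℝ] H) (hT : T = (ContinuousLinearMap.adjoint Sρ).comp Sρ)
    -- a singular value decomposition of `S_ρ`
    {ι : Type*} (e : HilbertBasis ι ℝ H) (μ : ι → ℝ) (hμ : ∀ i, 0 ≤ μ i)
    (hTe : ∀ i, T (e i) = μ i • e i)
    (f : ι → Lp ℝ 2 ρX) (hf : Orthonormal ℝ f)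
    (hSVD : ∀ i, Sρ (e i) = Real.sqrt (μ i) • f i)
    -- the source condition `f_H = ℒ^ζ g₀`, `‖g₀‖_ρ ≤ R`
    (ζ R : ℝ) (hζ : 0 ≤ ζ) (hR : 0 < R)
    (fH g₀ : Lp ℝ 2 ρX) (hg₀ : ‖g₀‖ ≤ R)
    (hfHmem : fH ∈ (Submodule.span ℝ (Set.range f)).topologicalClosure)
    (hsource : ∀ i, ⟪fH, f i⟫ = μ i ^ ζ * ⟪g₀, f i⟫)
    -- `ω_⋆^λ = G_λ(T) S_ρ* f_H`
    (lam : ℝ) (hlam : 0 < lam)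
    (ωstar : H)
    (hωstar : ∀ i, ⟪ωstar, e i⟫ =
      if lam ≤ μ i then (μ i)⁻¹ * ⟪(ContinuousLinearMap.adjoint Sρ) fH, e i⟫ else 0) :
    -- (1) for any `a ≤ ζ`, `‖ℒ^{−a}(S_ρ ω_⋆^λ − f_H)‖_ρ ≤ R λ^{ζ−a}`
    (∀ a : ℝ, a ≤ ζ →
      ∀ g : Lp ℝ 2 ρX, g ∈ (Submodule.span ℝ (Set.range f)).topologicalClosure →
        (∀ i, ⟪g, f i⟫ = μ i ^ (-a) * ⟪Sρ ωstar - fH, f i⟫) →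
        ‖g‖ ≤ R * lam ^ (ζ - a)) ∧
    -- (2) the bounds on `‖T^{a−1/2} ω_⋆^λ‖_H`
    (∀ a : ℝ, ∀ v : H, (∀ i, ⟪v, e i⟫ = μ i ^ (a - 1 / 2) * ⟪ωstar, e i⟫) →
      ((-ζ ≤ a → a ≤ 1 - ζ → ‖v‖ ≤ R * lam ^ (ζ + a - 1)) ∧
        (1 - ζ ≤ a → ‖v‖ ≤ R * κ ^ (2 * (ζ + a - 1))))) := by
  classical
  -- coordinates of `S_ρ* f_H`
  have hadj : ∀ i, ⟪(ContinuousLinearMap.adjoint Sρ) fH, e i⟫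
      = Real.sqrt (μ i) * (μ i ^ ζ * ⟪g₀, f i⟫) := by
    intro i
    rw [ContinuousLinearMap.adjoint_inner_left, hSVD, real_inner_smul_right, hsource]
  -- coordinates of `ωstar`
  have hω : ∀ i, ⟪ωstar, e i⟫ =
      if lam ≤ μ i then μ i ^ (ζ - 1/2) * ⟪g₀, f i⟫ else 0 := by
    intro i
    rw [hωstar, hadj]
    split_ifs with h
    · have hp : 0 < μ i := lt_of_lt_of_le hlam h
      rw [Real.sqrt_eq_rpow, show (ζ - 1/2 : ℝ) = -1 + (1/2 + ζ) by ring,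
        Real.rpow_add hp, Real.rpow_add hp, Real.rpow_neg_one]
      ring
    · rfl
  -- `S_ρ* (f j) = √(μ j) • e j`
  have hext : ∀ (x y : H), (∀ i, ⟪e i, x⟫ = ⟪e i, y⟫) → x = y := by
    intro x y hxy
    apply e.repr.injective
    apply lp.ext
    funext i
    rw [e.repr_apply_apply, e.repr_apply_apply, hxy i]
  have horthf := orthonormal_iff_ite.mp hf
  have horthe := orthonormal_iff_ite.mp e.orthonormal
  have hadjf : ∀ j, (ContinuousLinearMap.adjoint Sρ) (f j) = Real.sqrt (μ j) • e j := by
    intro j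
    apply hext
    intro i
    rw [ContinuousLinearMap.adjoint_inner_right, hSVD, real_inner_smul_left,
      real_inner_smul_right, horthf i j, horthe i j]
    by_cases hij : i = j
    · subst hij; simp
    · simp [hij]
  -- coordinates of `S_ρ ωstar`
  have hSω : ∀ i, ⟪Sρ ωstar, f i⟫ = Real.sqrt (μ i) * ⟪ωstar, e i⟫ := by
    intro i
    rw [← ContinuousLinearMap.adjoint_inner_right, hadjf, real_inner_smul_right]
  -- the residual coordinates
  have hdiff : ∀ i, ⟪Sρ ωstar - fH, f i⟫ =
      if lam ≤ μ i then 0 else -(μ i ^ ζ * ⟪g₀, f i⟫) := by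
    intro i
    rw [inner_sub_left, hSω, hω, hsource]
    split_ifs with h
    · have hp : 0 < μ i := lt_of_lt_of_le hlam h
      rw [Real.sqrt_eq_rpow, ← mul_assoc, ← Real.rpow_add hp,
        show (1/2 + (ζ - 1/2) : ℝ) = ζ by ring]
      ring
    · ring
  constructor
  · -- part (1)
    intro a ha g hg hgc
    haveI : CompleteSpace ((Submodule.span ℝ (Set.range f)).topologicalClosure) :=
      (Submodule.isClosed_topologicalClosure _).completeSpace_coe
    obtain ⟨b, hb⟩ := exists_hilbertBasis_closure_span hf
    have hM : (0:ℝ) ≤ lam ^ (ζ - a) := Real.rpow_nonneg hlam.le _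
    have hcoord : ∀ i,
        |⟪(⟨g, hg⟩ : (Submodule.span ℝ (Set.range f)).topologicalClosure), b i⟫|
        ≤ lam ^ (ζ - a) * |⟪g₀, f i⟫| := by
      intro i
      have hcoe : (⟪(⟨g, hg⟩ : (Submodule.span ℝ (Set.range f)).topologicalClosure), b i⟫ : ℝ)
          = ⟪g, f i⟫ := by
        rw [Submodule.coe_inner, hb i]
      rw [hcoe, hgc i, hdiff i]
      split_ifs with h
      · simpa using mul_nonneg hM (abs_nonneg _)
      · have hμlam : μ i < lam := not_le.mp h
        rw [abs_mul, abs_neg, abs_mul, abs_of_nonneg (Real.rpow_nonneg (hμ i) _),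
          abs_of_nonneg (Real.rpow_nonneg (hμ i) _), ← mul_assoc]
        refine mul_le_mul_of_nonneg_right ?_ (abs_nonneg _)
        rcases (hμ i).eq_or_lt with hz | hp
        · rw [← hz]
          rcases hζ.eq_or_lt with hz2 | hz2
          · rcases ha.eq_or_lt with haz | haz
            · rw [haz, ← hz2]; simp
            · rw [Real.zero_rpow (by rw [← hz2] at haz; exact (neg_pos.mpr haz).ne'),
                zero_mul]
              exact Real.rpow_nonneg hlam.le _
          · rw [Real.zero_rpow hz2.ne', mul_zero]
            exact Real.rpow_nonneg hlam.le _
        · rw [← Real.rpow_add hp, show (-a + ζ : ℝ) = ζ - a by ring]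
          exact Real.rpow_le_rpow (hμ i) hμlam.le (by linarith)
    have hnorm := norm_le_of_coord_dominated b hf
      (⟨g, hg⟩ : (Submodule.span ℝ (Set.range f)).topologicalClosure) g₀ hM hcoord
    calc ‖g‖ ≤ lam ^ (ζ - a) * ‖g₀‖ := hnorm
      _ ≤ lam ^ (ζ - a) * R := mul_le_mul_of_nonneg_left hg₀ hM
      _ = R * lam ^ (ζ - a) := mul_comm _ _
  · -- part (2)
    intro a v hv
    have hvc : ∀ i, ⟪v, e i⟫ =
        if lam ≤ μ i then μ i ^ (ζ + a - 1) * ⟪g₀, f i⟫ else 0 := by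
      intro i
      rw [hv, hω]
      split_ifs with h
      · have hp : 0 < μ i := lt_of_lt_of_le hlam h
        rw [← mul_assoc, ← Real.rpow_add hp,
          show (a - 1/2 + (ζ - 1/2) : ℝ) = ζ + a - 1 by ring]
      · rw [mul_zero]
    constructor
    · intro h1 h2
      have hM : (0:ℝ) ≤ lam ^ (ζ + a - 1) := Real.rpow_nonneg hlam.le _
      have hcoord : ∀ i, |⟪v, e i⟫| ≤ lam ^ (ζ + a - 1) * |⟪g₀, f i⟫| := by
        intro i
        rw [hvc i]
        split_ifs with h
        · rw [abs_mul, abs_of_nonneg (Real.rpow_nonneg (hμ i) _)]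
          exact mul_le_mul_of_nonneg_right
            (Real.rpow_le_rpow_of_nonpos hlam h (by linarith)) (abs_nonneg _)
        · simpa using mul_nonneg hM (abs_nonneg _)
      have hnorm := norm_le_of_coord_dominated e hf v g₀ hM hcoord
      calc ‖v‖ ≤ lam ^ (ζ + a - 1) * ‖g₀‖ := hnorm
        _ ≤ lam ^ (ζ + a - 1) * R := mul_le_mul_of_nonneg_left hg₀ hM
        _ = R * lam ^ (ζ + a - 1) := mul_comm _ _
    · intro h1
      have hκ0 : (0:ℝ) ≤ κ := le_trans zero_le_one hκ
      have hae : ∀ᵐ x ∂ρX, ‖x‖ ≤ κ := ae_norm_le_of_inner_bound ρX κ hκ0 hbound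
      have hμκ : ∀ i, μ i ≤ κ ^ 2 := by
        intro i
        have hb : ∀ᵐ x ∂ρX, ‖(Sρ (e i) : H → ℝ) x‖ ≤ κ := by
          filter_upwards [hSρ (e i), hae] with x hx hx2
          rw [hx]
          calc ‖(⟪e i, x⟫ : ℝ)‖ = |⟪e i, x⟫| := rfl
            _ ≤ ‖e i‖ * ‖x‖ := abs_real_inner_le_norm _ _
            _ ≤ 1 * κ := by
                rw [e.orthonormal.1 i, one_mul]
                simpa using hx2
            _ = κ := one_mul κ
        have hnormS : ‖Sρ (e i)‖ ≤ κ := by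
          have hμ1 : (measureUnivNNReal ρX : ℝ) = 1 := by
            simp [measureUnivNNReal, measure_univ]
          have := Lp.norm_le_of_ae_bound hκ0 hb
          rwa [hμ1, Real.one_rpow, one_mul] at this
        have hSe : ‖Sρ (e i)‖ = Real.sqrt (μ i) := by
          rw [hSVD, norm_smul, hf.1 i, mul_one, Real.norm_eq_abs,
            abs_of_nonneg (Real.sqrt_nonneg _)]
        have h2 : Real.sqrt (μ i) ≤ κ := hSe ▸ hnormS
        calc μ i = Real.sqrt (μ i) ^ 2 := (Real.sq_sqrt (hμ i)).symm
          _ ≤ κ ^ 2 := pow_le_pow_left₀ (Real.sqrt_nonneg _) h2 2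
      have hM : (0:ℝ) ≤ κ ^ (2 * (ζ + a - 1)) := Real.rpow_nonneg hκ0 _
      have hκsq : (κ:ℝ) ^ (2 * (ζ + a - 1)) = (κ ^ 2 : ℝ) ^ (ζ + a - 1) := by
        rw [Real.rpow_mul hκ0]
        congr 1
        rw [← Real.rpow_natCast κ 2]
        norm_num
      have hcoord : ∀ i, |⟪v, e i⟫| ≤ κ ^ (2 * (ζ + a - 1)) * |⟪g₀, f i⟫| := by
        intro i
        rw [hvc i]
        split_ifs with h
        · rw [abs_mul, abs_of_nonneg (Real.rpow_nonneg (hμ i) _), hκsq]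
          refine mul_le_mul_of_nonneg_right ?_ (abs_nonneg _)
          exact Real.rpow_le_rpow (hμ i) (hμκ i) (by linarith)
        · simpa using mul_nonneg hM (abs_nonneg _)
      have hnorm := norm_le_of_coord_dominated e hf v g₀ hM hcoord
      calc ‖v‖ ≤ κ ^ (2 * (ζ + a - 1)) * ‖g₀‖ := hnorm
        _ ≤ κ ^ (2 * (ζ + a - 1)) * R := mul_le_mul_of_nonneg_left hg₀ hM
        _ = R * κ ^ (2 * (ζ + a - 1)) := mul_comm _ _
end
end
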